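/- Let G = (V, E, w) be a finite weighted graph with nonnegative edge weights, Δ, T ∈ ℝ^V with Δ ≥ 0 and Tᵢ = 1 for all i, and let x* be an optimal solution of min xᵀLx + xᵀ(T−Δ) subject to x ≥ 0, where L is the weighted graph Laplacian. Assume x* satisfies the complementary slackness property: x*ᵢ > 0 implies Δᵢ + Σ_{j∼i} w(i,j)(x*ⱼ − x*ᵢ) = Tᵢ = 1. Then |supp(x*)| ≤ Σᵢ Δᵢ. -/
import Mathlib


open Finset

/-- For an optimal solution `x*` of the `ℓ2`-norm flow diffusion problem on a finite
weighted graph with unit sink capacities, complementary slackness implies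
`|supp(x*)| ≤ Σᵢ Δᵢ`. -/
theorem stmt_5 {V : Type*} [Fintype V] [DecidableEq V]
    (w : V → V → ℝ) (hw : ∀ i j, 0 ≤ w i j) (hsym : ∀ i j, w i j = w j i)
    (Δ x : V → ℝ) (hΔ : ∀ i, 0 ≤ Δ i) (hx : ∀ i, 0 ≤ x i)
    (hopt : ∀ y : V → ℝ, (∀ i, 0 ≤ y i) →
      (∑ i, x i * ∑ j, w i j * (x i - x j)) + ∑ i, x i * (1 - Δ i)
        ≤ (∑ i, y i * ∑ j, w i j * (y i - y j)) + ∑ i, y i * (1 - Δ i))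
    (hcs : ∀ i, 0 < x i → Δ i + ∑ j, w i j * (x j - x i) = 1) :
    ((univ.filter (fun i => x i ≠ 0)).card : ℝ) ≤ ∑ i, Δ i := by
  set S : Finset V := univ.filter (fun i => x i ≠ 0) with hS
  have hpos : ∀ i ∈ S, 0 < x i := by
    intro i hi
    simp only [hS, mem_filter] at hi
    exact lt_of_le_of_ne (hx i) (Ne.symm hi.2)
  -- total sum over all vertices is zero by symmetry
  have htot : ∑ i, ∑ j, w i j * (x j - x i) = 0 := by
    have h1 : ∑ i, ∑ j, w i j * x j = ∑ i, ∑ j, w i j * x i := by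
      rw [Finset.sum_comm]
      apply Finset.sum_congr rfl; intro i _
      apply Finset.sum_congr rfl; intro j _
      rw [hsym]
    simp only [mul_sub, Finset.sum_sub_distrib, h1, sub_self]
  -- split the sum over S and its complement
  have hsplit : ∑ i ∈ S, ∑ j, w i j * (x j - x i)
      + ∑ i ∈ Sᶜ, ∑ j, w i j * (x j - x i) = 0 := by
    rw [Finset.sum_add_sum_compl]; exact htot
  have hcompl : 0 ≤ ∑ i ∈ Sᶜ, ∑ j, w i j * (x j - x i) := by
    apply Finset.sum_nonneg
    intro i hi
    have hxi : x i = 0 := by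
      simp only [hS, Finset.mem_compl, mem_filter, mem_univ, true_and, not_not] at hi
      exact hi
    apply Finset.sum_nonneg
    intro j _
    rw [hxi]
    have := hw i j
    have := hx j
    nlinarith
  have hL : ∑ i ∈ S, ∑ j, w i j * (x j - x i) ≤ 0 := by linarith
  have hcard : (S.card : ℝ) = ∑ i ∈ S, (Δ i + ∑ j, w i j * (x j - x i)) := by
    rw [Finset.sum_congr rfl (fun i hi => hcs i (hpos i hi))]
    simp
  have hΔS : ∑ i ∈ S, Δ i ≤ ∑ i, Δ i :=
    Finset.sum_le_sum_of_subset_of_nonneg (Finset.subset_univ S)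
      (fun i _ _ => hΔ i)
  rw [hcard, Finset.sum_add_distrib]
  linarith
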